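/- arXiv:2405.15667 — 4 statements merged into one kernel-verified Lean document; each statement's English description precedes it below -/
import Mathlib

section
/- Let ρ, r ∈ (0,1) and let g : 𝔻 → 𝔻 be an analytic self-map of the unit disk with g(0) = 0 and |g'(0)| = ρ. Then for all z with |z| ≤ r, one has |g(z)| ≤ c·|z| where c = (ρ + r)/(1 + rρ). -/
open Complex Metric

lemma norm_le_norm_of_normSq_le {x y : ℂ} (h : Complex.normSq x ≤ Complex.normSq y) :
    ‖x‖ ≤ ‖y‖ := by
  rw [Complex.norm_def, Complex.norm_def]
  exact Real.sqrt_le_sqrt h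

lemma schwarz_alg {ρ r s t u : ℝ} (hρ0 : 0 < ρ) (hρ1 : ρ < 1) (hr1 : r < 1)
    (hs0 : 0 ≤ s) (hs1 : s ≤ 1) (ht0 : 0 < t) (htr : t ≤ r)
    (h : ρ^2 + s^2 - 2*u ≤ t^2 * (1 + ρ^2*s^2 - 2*u)) (hu : u ≤ ρ*s) :
    s * (1 + r*ρ) ≤ ρ + r := by
  have ht1 : t < 1 := lt_of_le_of_lt htr hr1
  have step1 : (s - ρ)^2 ≤ t^2 * (1 - ρ*s)^2 := by
    nlinarith [mul_nonneg (sub_nonneg.mpr hu) (by nlinarith : (0:ℝ) ≤ 1 - t^2)]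
  have h1ρs : 0 ≤ 1 - ρ*s := by nlinarith
  have step2 : s - ρ ≤ t * (1 - ρ*s) := by
    nlinarith [step1, mul_nonneg ht0.le h1ρs, sq_nonneg (s - ρ + t*(1 - ρ*s))]
  nlinarith [step2, mul_nonneg (sub_nonneg.mpr htr) (sub_nonneg.mpr (by nlinarith : ρ*s ≤ 1))]

lemma mobius_norm_le {a w : ℂ} (ha : ‖a‖ ≤ 1) (hw : ‖w‖ ≤ 1) :
    ‖a - w‖ ≤ ‖1 - (starRingEnd ℂ) a * w‖ := by
  apply norm_le_norm_of_normSq_le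
  have h1 : Complex.normSq a ≤ 1 := by
    rw [Complex.normSq_eq_norm_sq]; nlinarith [norm_nonneg a]
  have h2 : Complex.normSq w ≤ 1 := by
    rw [Complex.normSq_eq_norm_sq]; nlinarith [norm_nonneg w]
  have e1 : Complex.normSq (a - w)
      = Complex.normSq a + Complex.normSq w - 2 * (a * (starRingEnd ℂ) w).re :=
    Complex.normSq_sub a w
  have e2 : Complex.normSq (1 - (starRingEnd ℂ) a * w)
      = 1 + Complex.normSq a * Complex.normSq w - 2 * (a * (starRingEnd ℂ) w).re := by
    rw [Complex.normSq_sub, Complex.normSq_one, Complex.normSq_mul, Complex.normSq_conj,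
      one_mul, map_mul, Complex.conj_conj]
  rw [e1, e2]
  nlinarith
/-- Uniform Schwarz Lemma: if `g : 𝔻 → 𝔻` is analytic with `g 0 = 0` and
`‖deriv g 0‖ = ρ`, then `‖g z‖ ≤ ((ρ + r)/(1 + r*ρ)) * ‖z‖` for `‖z‖ ≤ r`. -/
theorem uniform_schwarz (ρ r : ℝ) (hρ : ρ ∈ Set.Ioo (0:ℝ) 1) (hr : r ∈ Set.Ioo (0:ℝ) 1)
    (g : ℂ → ℂ) (hg : DifferentiableOn ℂ g (ball (0:ℂ) 1))
    (hmaps : Set.MapsTo g (ball (0:ℂ) 1) (ball (0:ℂ) 1))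
    (hg0 : g 0 = 0) (hg' : ‖deriv g 0‖ = ρ) :
    ∀ z : ℂ, ‖z‖ ≤ r → ‖g z‖ ≤ ((ρ + r) / (1 + r * ρ)) * ‖z‖ := by
  obtain ⟨hρ0, hρ1⟩ := hρ
  obtain ⟨hr0, hr1⟩ := hr
  intro z hz
  rcases eq_or_ne z 0 with rfl | hz0
  · simp [hg0]
  have hb : (0:ℂ) ∈ ball (0:ℂ) 1 := by simp
  have hzb : z ∈ ball (0:ℂ) 1 := by
    rw [mem_ball, dist_zero_right]; linarith
  set a := deriv g 0 with ha
  set h := dslope g 0 with hhdef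
  have hmaps' : Set.MapsTo g (ball (0:ℂ) 1) (ball (g 0) 1) := by rwa [hg0]
  have hdh : DifferentiableOn ℂ h (ball (0:ℂ) 1) :=
    (differentiableOn_dslope (isOpen_ball.mem_nhds hb)).mpr hg
  have hh1 : ∀ w ∈ ball (0:ℂ) 1, ‖h w‖ ≤ 1 := by
    intro w hw
    have := Complex.norm_dslope_le_div_of_mapsTo_ball hg (hmaps'.mono_right ball_subset_closedBall) hw
    simpa using this
  have hh0 : h 0 = a := dslope_same g 0
  have hanorm : ‖a‖ = ρ := hg'
  -- the Möbius transform composed with h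
  set F : ℂ → ℂ := fun w => (a - h w) / (1 - (starRingEnd ℂ) a * h w) with hFdef
  have hdenom : ∀ w ∈ ball (0:ℂ) 1, (1 - (starRingEnd ℂ) a * h w) ≠ 0 := by
    intro w hw hc
    have h1 : ‖(starRingEnd ℂ) a * h w‖ ≤ ρ := by
      rw [norm_mul, RCLike.norm_conj, hanorm]
      nlinarith [hh1 w hw, norm_nonneg (h w)]
    have he : (1:ℂ) = (starRingEnd ℂ) a * h w := sub_eq_zero.mp hc
    rw [← he] at h1
    simp at h1; linarith
  have hF1 : ∀ w ∈ ball (0:ℂ) 1, ‖F w‖ ≤ 1 := by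
    intro w hw
    rw [hFdef]
    simp only [norm_div]
    rw [div_le_one (by
      rcases (norm_nonneg (1 - (starRingEnd ℂ) a * h w)).lt_or_eq with hlt | heq
      · exact hlt
      · exact absurd (norm_eq_zero.mp heq.symm) (hdenom w hw))]
    simpa using mobius_norm_le (by rw [hanorm]; linarith) (hh1 w hw)
  have hFd : DifferentiableOn ℂ F (ball (0:ℂ) 1) := by
    apply DifferentiableOn.div
    · exact (differentiableOn_const a).sub hdh
    · exact (differentiableOn_const 1).sub ((differentiableOn_const _).mul hdh)
    · exact hdenom
  have hF0 : F 0 = 0 := by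
    simp [hFdef, hh0]
  have hkey : ‖F z‖ ≤ ‖z‖ := by
    by_contra hcon
    push_neg at hcon
    have hzpos : 0 < ‖z‖ := norm_pos_iff.mpr hz0
    obtain ⟨R, hR1, hR2⟩ := exists_between ((one_lt_div hzpos).mpr hcon)
    have hFm : Set.MapsTo F (ball (0:ℂ) 1) (ball (F 0) R) := by
      intro w hw
      rw [hF0, mem_ball, dist_zero_right]
      exact lt_of_le_of_lt (hF1 w hw) hR1
    have := Complex.dist_le_div_mul_dist_of_mapsTo_ball hFd (hFm.mono_right ball_subset_closedBall) hzb
    rw [hF0, dist_zero_right, dist_zero_right, div_one] at this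
    have : ‖F z‖ < ‖F z‖ := lt_of_le_of_lt this (by
      rw [← lt_div_iff₀ hzpos]; exact hR2)
    exact lt_irrefl _ this
  -- unfold the inequality
  have hBpos : 0 < ‖1 - (starRingEnd ℂ) a * h z‖ := by
    rcases (norm_nonneg (1 - (starRingEnd ℂ) a * h z)).lt_or_eq with hlt | heq
    · exact hlt
    · exact absurd (norm_eq_zero.mp heq.symm) (hdenom z hzb)
  have hAB : ‖a - h z‖ ≤ ‖z‖ * ‖1 - (starRingEnd ℂ) a * h z‖ := by
    have := hkey
    rw [hFdef] at this
    simp only [norm_div] at this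
    rwa [div_le_iff₀ hBpos] at this
  set s := ‖h z‖ with hs
  set t := ‖z‖ with ht
  have hs1 : s ≤ 1 := hh1 z hzb
  have hs0 : 0 ≤ s := norm_nonneg _
  have ht0 : 0 < t := norm_pos_iff.mpr hz0
  have ht1 : t < 1 := by rw [ht]; linarith
  -- square and expand
  have hu : (a * (starRingEnd ℂ) (h z)).re ≤ ρ * s := by
    calc (a * (starRingEnd ℂ) (h z)).re ≤ ‖a * (starRingEnd ℂ) (h z)‖ :=
          Complex.re_le_norm _
      _ = ρ * s := by rw [norm_mul, RCLike.norm_conj, hanorm]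
  set u := (a * (starRingEnd ℂ) (h z)).re with hudef
  have hnsq : ∀ x : ℂ, Complex.normSq x = ‖x‖ ^ 2 := by
    intro x; rw [Complex.normSq_eq_norm_sq]
  have eA : ‖a - h z‖ ^ 2 = ρ^2 + s^2 - 2*u := by
    rw [← hnsq, Complex.normSq_sub, hnsq, hnsq, hanorm, hudef, hs]
  have eB : ‖1 - (starRingEnd ℂ) a * h z‖ ^ 2 = 1 + ρ^2*s^2 - 2*u := by
    rw [← hnsq, Complex.normSq_sub, Complex.normSq_one, Complex.normSq_mul,
      Complex.normSq_conj, one_mul, map_mul, Complex.conj_conj, hnsq, hnsq, hanorm, hs, hudef]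
  have hAB2 : ‖a - h z‖ ^ 2 ≤ t^2 * ‖1 - (starRingEnd ℂ) a * h z‖ ^ 2 := by
    have h0 : 0 ≤ ‖a - h z‖ := norm_nonneg _
    nlinarith [hAB, mul_pos ht0 hBpos]
  have step3 : s ≤ (ρ + r) / (1 + r * ρ) := by
    rw [le_div_iff₀ (by nlinarith)]
    refine schwarz_alg hρ0 hρ1 hr1 hs0 hs1 ht0 hz ?_ hu
    rw [eA, eB] at hAB2
    linarith [hAB2]
  have hgz : ‖g z‖ = s * t := by
    have : h z = g z / z := by
      rw [hhdef, dslope_of_ne _ hz0, slope_def_field, hg0, sub_zero, sub_zero]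
    rw [hs, ht, this, norm_div, div_mul_cancel₀]
    exact norm_ne_zero_iff.mpr hz0
  rw [hgz]
  exact mul_le_mul_of_nonneg_right step3 ht0.le
end

section
/- Let ρ, r ∈ (0,1) with ρ ≤ r, and let g : 𝔻 → 𝔻 be analytic with g(0) = 0 and |g'(0)| = ρ. Then for all |z| ≤ r, |g(z)| ≤ 2r²/(1+r²) < r. -/
open Complex Metric
set_option maxHeartbeats 1000000

open Set ComplexConjugate in
private lemma uschwarz_normSq_identity (a w : ℂ) :
    normSq (1 - conj a * w) - normSq (w - a)
      = (1 - normSq a) * (1 - normSq w) := by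
  simp [Complex.normSq_apply, Complex.sub_re, Complex.sub_im, Complex.mul_re, Complex.mul_im,
    Complex.conj_re, Complex.conj_im, Complex.one_re, Complex.one_im]
  ring

open Set ComplexConjugate in
private lemma uschwarz_normSq_sub (a w : ℂ) :
    normSq (w - a) = normSq w - 2 * (w * conj a).re + normSq a := by
  simp [Complex.normSq_apply, Complex.sub_re, Complex.sub_im, Complex.mul_re, Complex.mul_im,
    Complex.conj_re, Complex.conj_im]
  ring

open Set ComplexConjugate in
private lemma uschwarz_normSq_one_sub (a w : ℂ) :
    normSq (1 - conj a * w) = 1 - 2 * (w * conj a).re + normSq a * normSq w := by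
  simp [Complex.normSq_apply, Complex.sub_re, Complex.sub_im, Complex.mul_re, Complex.mul_im,
    Complex.conj_re, Complex.conj_im, Complex.one_re, Complex.one_im]
  ring

open Set ComplexConjugate in
/-- Uniform Schwarz Lemma, second part: if moreover `ρ ≤ r`, then
`‖g z‖ ≤ 2r²/(1+r²) < r` for all `‖z‖ ≤ r`. -/
theorem uniform_schwarz_rho_le_r (ρ r : ℝ) (hρ : ρ ∈ Set.Ioo (0:ℝ) 1)
    (hr : r ∈ Set.Ioo (0:ℝ) 1) (hρr : ρ ≤ r)
    (g : ℂ → ℂ) (hg : DifferentiableOn ℂ g (ball (0:ℂ) 1))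
    (hmaps : Set.MapsTo g (ball (0:ℂ) 1) (ball (0:ℂ) 1))
    (hg0 : g 0 = 0) (hg' : ‖deriv g 0‖ = ρ) :
    (∀ z : ℂ, ‖z‖ ≤ r → ‖g z‖ ≤ 2 * r ^ 2 / (1 + r ^ 2)) ∧
      2 * r ^ 2 / (1 + r ^ 2) < r := by
  obtain ⟨hρ0, hρ1⟩ := hρ
  obtain ⟨hr0, hr1⟩ := hr
  have key2 : 2 * r ^ 2 / (1 + r ^ 2) < r := by
    rw [div_lt_iff₀ (by positivity)]
    nlinarith [mul_pos hr0 (mul_pos (sub_pos.2 hr1) (sub_pos.2 hr1))]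
  refine ⟨?_, key2⟩
  intro z hz
  set a := deriv g 0 with ha
  set h := dslope g 0 with hh
  have hball : (0:ℂ) ∈ ball (0:ℂ) 1 := mem_ball_self one_pos
  have hdiff : DifferentiableOn ℂ h (ball (0:ℂ) 1) :=
    (differentiableOn_dslope (isOpen_ball.mem_nhds hball)).mpr hg
  have hmaps' : MapsTo g (ball (0:ℂ) 1) (ball (g 0) 1) := by rwa [hg0]
  have hle : ∀ w ∈ ball (0:ℂ) 1, ‖h w‖ ≤ 1 := fun w hw => by
    simpa using Complex.norm_dslope_le_div_of_mapsTo_ball hg (hmaps'.mono_right ball_subset_closedBall) hw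
  have h0 : h 0 = a := dslope_same g 0
  have hna : ‖a‖ = ρ := hg'
  have hlt : ∀ w ∈ ball (0:ℂ) 1, ‖h w‖ < 1 := by
    intro w hw
    rcases lt_or_eq_of_le (hle w hw) with h' | h'
    · exact h'
    · exfalso
      have hmax : IsMaxOn (norm ∘ h) (ball (0:ℂ) 1) w := fun x hx => by
        simpa [← h'] using hle x hx
      have heq := Complex.eqOn_of_isPreconnected_of_isMaxOn_norm
        (convex_ball (0:ℂ) 1).isPreconnected isOpen_ball hdiff hw hmax hball
      simp only [Function.const_apply] at heq
      rw [h0] at heq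
      rw [← heq, hna] at h'
      linarith
  -- the Möbius transform composed with h
  set F : ℂ → ℂ := fun w => (h w - a) / (1 - conj a * h w) with hF
  have hdenom : ∀ w ∈ ball (0:ℂ) 1, (1 : ℂ) - conj a * h w ≠ 0 := by
    intro w hw
    have : ‖conj a * h w‖ < 1 := by
      rw [norm_mul, RCLike.norm_conj, hna]
      calc ρ * ‖h w‖ ≤ ρ * 1 := by
            exact mul_le_mul_of_nonneg_left (hle w hw) hρ0.le
        _ < 1 := by linarith
    intro hcon
    rw [sub_eq_zero] at hcon
    rw [← hcon] at this
    simp at this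
  have hFdiff : DifferentiableOn ℂ F (ball (0:ℂ) 1) := by
    apply DifferentiableOn.div
    · exact hdiff.sub (differentiableOn_const a)
    · exact (differentiableOn_const 1).sub ((differentiableOn_const (conj a)).mul hdiff)
    · exact hdenom
  have hF0 : F 0 = 0 := by simp [hF, h0]
  have hFmaps : MapsTo F (ball (0:ℂ) 1) (ball (0:ℂ) 1) := by
    intro w hw
    rw [mem_ball_zero_iff, hF]
    rw [norm_div, div_lt_one (by
      rw [norm_pos_iff]; exact hdenom w hw)]
    have key : normSq (1 - conj a * h w) - normSq (h w - a)
        = (1 - normSq a) * (1 - normSq (h w)) := uschwarz_normSq_identity a (h w)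
    have h1 : normSq a < 1 := by
      rw [← Complex.sq_norm]
      have : ‖a‖ = ρ := hna
      rw [this]; nlinarith
    have h2 : normSq (h w) < 1 := by
      rw [← Complex.sq_norm]
      have := hlt w hw
      nlinarith [norm_nonneg (h w)]
    have : normSq (h w - a) < normSq (1 - conj a * h w) := by nlinarith
    have := Real.sqrt_lt_sqrt (normSq_nonneg _) this
    rwa [← Complex.norm_def, ← Complex.norm_def] at this
  have hz1 : ‖z‖ < 1 := lt_of_le_of_lt hz hr1
  have hzball : z ∈ ball (0:ℂ) 1 := mem_ball_zero_iff.2 hz1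
  -- Schwarz lemma applied to F
  have hSch : ‖F z‖ ≤ ‖z‖ :=
    Complex.norm_le_norm_of_mapsTo_ball hFdiff (hFmaps.mono_right ball_subset_closedBall) hF0 hz1
  -- convert to the key quadratic inequality
  set m := ‖h z‖ with hm
  have hm0 : 0 ≤ m := norm_nonneg _
  have hm1 : m ≤ 1 := hle z hzball
  have hnum : ‖h z - a‖ ≤ r * ‖1 - conj a * h z‖ := by
    have hdpos : 0 < ‖(1:ℂ) - conj a * h z‖ := by
      rw [norm_pos_iff]; exact hdenom z hzball
    have : ‖F z‖ ≤ r := by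
      exact hSch.trans hz
    rw [hF, norm_div, div_le_iff₀ hdpos] at this
    exact this
  have hsq : normSq (h z - a) ≤ r ^ 2 * normSq (1 - conj a * h z) := by
    have := mul_self_le_mul_self (norm_nonneg (h z - a)) hnum
    calc normSq (h z - a) = ‖h z - a‖ * ‖h z - a‖ := by
          rw [← Complex.sq_norm]; ring
      _ ≤ (r * ‖1 - conj a * h z‖) * (r * ‖1 - conj a * h z‖) := this
      _ = r ^ 2 * normSq (1 - conj a * h z) := by
          rw [← Complex.sq_norm]; ring
  set y := (h z * conj a).re with hy
  have hexp1 : normSq (h z - a) = m ^ 2 - 2 * y + ρ ^ 2 := by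
    rw [uschwarz_normSq_sub, ← Complex.sq_norm, ← Complex.sq_norm, hna]
  have hexp2 : normSq (1 - conj a * h z) = 1 - 2 * y + ρ ^ 2 * m ^ 2 := by
    rw [uschwarz_normSq_one_sub, ← Complex.sq_norm, ← Complex.sq_norm, hna]
  have hyb : y ≤ ρ * m := by
    calc y ≤ |(h z * conj a).re| := le_abs_self _
      _ ≤ ‖h z * conj a‖ := Complex.abs_re_le_norm _
      _ = ρ * m := by
          rw [norm_mul, RCLike.norm_conj, hna]; ring
  rw [hexp1, hexp2] at hsq
  -- quadratic step : (1+rρ) m ≤ r + ρ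
  have hq : (1 - ρ ^ 2 * r ^ 2) * m ^ 2 - 2 * ρ * (1 - r ^ 2) * m + (ρ ^ 2 - r ^ 2) ≤ 0 := by
    nlinarith [mul_le_mul_of_nonneg_left hyb (show (0:ℝ) ≤ 1 - r ^ 2 by nlinarith)]
  have hstep2 : (1 + r * ρ) * m ≤ r + ρ := by
    by_contra hcon
    push_neg at hcon
    have hmpos : 0 < m := by nlinarith [mul_pos hρ0 hr0]
    have h1rρ : r * ρ < 1 := by nlinarith
    have hB : 0 < (1 - r * ρ) * m - (ρ - r) := by
      nlinarith [mul_pos (sub_pos.2 h1rρ) hmpos]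
    nlinarith [mul_pos (by nlinarith : (0:ℝ) < (1 + r * ρ) * m - (r + ρ)) hB]
  -- g z = z * h z
  have hgz : ‖g z‖ = ‖z‖ * m := by
    rcases eq_or_ne z 0 with rfl | hz0
    · simp [hg0]
    · have hzh : z * h z = g z := by
        rw [hh, dslope_of_ne g hz0, slope_def_field, hg0]
        field_simp
        ring
      rw [← hzh, norm_mul]
  rw [hgz, le_div_iff₀ (by positivity : (0:ℝ) < 1 + r ^ 2)]
  have hzr : ‖z‖ ≤ r := hz
  have h_rm : r * m ≤ 1 := by nlinarith
  nlinarith [mul_le_mul_of_nonneg_right hz hm0,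
    mul_le_mul_of_nonneg_right (mul_le_mul_of_nonneg_right hz hm0) (sq_nonneg r),
    mul_le_mul_of_nonneg_left hstep2 hr0.le,
    mul_nonneg (mul_nonneg hr0.le (sub_nonneg.2 hρr)) (sub_nonneg.2 h_rm)]
end

section
/- Let 0 < ρ ≤ r < 1 and let g : 𝔻 → 𝔻 be analytic with g(0) = 0 and |g'(0)| = ρ. Then the preimage g⁻¹(closed disk of radius r) contains the closed disk of radius R = √(r/(2−r)), and r < R < 1. -/
open Complex Metric

lemma aux_normSq1 (a w : ℂ) :
    Complex.normSq (1 - (starRingEnd ℂ) a * w) - Complex.normSq (w - a)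
      = (1 - Complex.normSq a) * (1 - Complex.normSq w) := by
  simp only [Complex.normSq_apply, Complex.mul_re, Complex.mul_im, Complex.sub_re,
    Complex.sub_im, Complex.one_re, Complex.one_im, Complex.conj_re, Complex.conj_im]
  ring

lemma aux_normSq2 (a w : ℂ) :
    Complex.normSq (1 + (starRingEnd ℂ) a * w)
      = 1 + Complex.normSq a * Complex.normSq w + 2 * (w * (starRingEnd ℂ) a).re := by
  simp only [Complex.normSq_apply, Complex.mul_re, Complex.mul_im, Complex.add_re,
    Complex.add_im, Complex.one_re, Complex.one_im, Complex.conj_re, Complex.conj_im]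
  ring

lemma aux_normSq3 (a w : ℂ) :
    Complex.normSq (w + a)
      = Complex.normSq w + Complex.normSq a + 2 * (w * (starRingEnd ℂ) a).re := by
  simp only [Complex.normSq_apply, Complex.mul_re, Complex.mul_im, Complex.add_re,
    Complex.add_im, Complex.conj_re, Complex.conj_im]
  ring

lemma aux_sq_ineq (ρ s u : ℝ) (hρ0 : 0 ≤ ρ) (hρ1 : ρ ≤ 1) (hs0 : 0 ≤ s) (hs1 : s ≤ 1)
    (hu : u ≤ ρ * s) :
    (s ^ 2 + ρ ^ 2 + 2 * u) * (1 + ρ * s) ^ 2 ≤ (s + ρ) ^ 2 * (1 + ρ ^ 2 * s ^ 2 + 2 * u) := by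
  have h1 : (0:ℝ) ≤ 1 - s ^ 2 := by nlinarith
  have h2 : (0:ℝ) ≤ 1 - ρ ^ 2 := by nlinarith
  have h3 : (0:ℝ) ≤ (1 + ρ * s) ^ 2 - (s + ρ) ^ 2 := by nlinarith [mul_nonneg h1 h2]
  nlinarith [mul_nonneg (sub_nonneg.2 hu) h3]

lemma aux_final (ρ r R s t : ℝ) (hρ : 0 < ρ) (hρr : ρ ≤ r) (hr : r < 1) (hR0 : 0 < R)
    (hRsq2 : R ^ 2 * (2 - r) = r) (hR2r : R * (2 - r) ≤ 1)
    (hs0 : 0 ≤ s) (hst : s ≤ t) (htR : t ≤ R) : t * (s + ρ) ≤ r * (1 + ρ * s) := by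
  have hr0 : 0 < r := lt_of_lt_of_le hρ hρr
  have h2r : (0:ℝ) < 2 - r := by linarith
  have h1r : (0:ℝ) ≤ 1 - r := by linarith
  have hrρR : r * ρ ≤ R := by nlinarith
  have s1 : t * (s + ρ) ≤ R * (s + ρ) :=
    mul_le_mul_of_nonneg_right htR (add_nonneg hs0 hρ.le)
  have s2 : R * (s + ρ) ≤ R ^ 2 + R * ρ * (1 - r) + r * ρ * s := by
    nlinarith [mul_nonneg (sub_nonneg.2 (hst.trans htR)) (sub_nonneg.2 hrρR)]
  have s3 : R * ρ * (1 - r) ≤ R * r * (1 - r) :=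
    mul_le_mul_of_nonneg_right (mul_le_mul_of_nonneg_left hρr hR0.le) h1r
  have s4 : R ^ 2 + R * r * (1 - r) ≤ r := by
    nlinarith [mul_nonneg (mul_nonneg hr0.le h1r) (sub_nonneg.2 hR2r), h2r]
  nlinarith [s1, s2, s3, s4, mul_nonneg (mul_nonneg hr0.le hρ.le) hs0]

lemma aux_last (ρ r s t H : ℝ) (hH : H * (1 + ρ * s) ≤ s + ρ)
    (hts : t * (s + ρ) ≤ r * (1 + ρ * s)) (ht0 : 0 ≤ t) (hH0 : 0 ≤ H)
    (hpos : 0 < 1 + ρ * s) : t * H ≤ r := by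
  nlinarith [mul_le_mul_of_nonneg_left hH ht0]

/-- If `0 < ρ ≤ r < 1` and `g : 𝔻 → 𝔻` is analytic with `g 0 = 0`, `‖deriv g 0‖ = ρ`,
then `g⁻¹(closedBall 0 r)` contains `closedBall 0 R` where `R = √(r/(2−r))`,
and `r < R < 1`. -/
theorem uniform_schwarz_preimage (ρ r : ℝ) (hρ : 0 < ρ) (hρr : ρ ≤ r) (hr : r < 1)
    (g : ℂ → ℂ) (hg : DifferentiableOn ℂ g (ball (0:ℂ) 1))
    (hmaps : Set.MapsTo g (ball (0:ℂ) 1) (ball (0:ℂ) 1))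
    (hg0 : g 0 = 0) (hg' : ‖deriv g 0‖ = ρ) :
    (∀ z : ℂ, ‖z‖ ≤ Real.sqrt (r / (2 - r)) → ‖g z‖ ≤ r) ∧
      r < Real.sqrt (r / (2 - r)) ∧ Real.sqrt (r / (2 - r)) < 1 := by
  have hr0 : 0 < r := lt_of_lt_of_le hρ hρr
  have h2r : 0 < 2 - r := by linarith
  set R := Real.sqrt (r / (2 - r)) with hRdef
  have hRsq : R ^ 2 = r / (2 - r) := Real.sq_sqrt (by positivity)
  have hR0 : 0 < R := Real.sqrt_pos.2 (by positivity)
  clear_value R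
  have hRsq2 : R ^ 2 * (2 - r) = r := by rw [hRsq]; field_simp
  have hR1 : R < 1 := by nlinarith
  have hrR : r < R := by
    nlinarith [mul_pos hr0 (mul_pos (by linarith : (0:ℝ) < 1 - r)
      (by linarith : (0:ℝ) < 1 - r))]
  have hR2r : R * (2 - r) ≤ 1 := by nlinarith [sq_nonneg (R * (2 - r) - 1), sq_nonneg (1 - r)]
  refine ⟨?_, hrR, hR1⟩
  -- main part
  have hρ1 : ρ < 1 := lt_of_le_of_lt hρr hr
  have hball0 : (0:ℂ) ∈ ball (0:ℂ) 1 := mem_ball_self one_pos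
  have hmapsg : Set.MapsTo g (ball (0:ℂ) 1) (ball (g 0) 1) := by rwa [hg0]
  set h := dslope g 0 with hhdef
  have hhd : DifferentiableOn ℂ h (ball (0:ℂ) 1) :=
    (differentiableOn_dslope (isOpen_ball.mem_nhds hball0)).2 hg
  have hhlt : ∀ z ∈ ball (0:ℂ) 1, ‖h z‖ < 1 := by
    intro z hz
    have hle : ‖h z‖ ≤ 1 := by
      simpa using Complex.norm_dslope_le_div_of_mapsTo_ball hg (hmapsg.mono_right ball_subset_closedBall) hz
    rcases hle.lt_or_eq with hlt | heq
    · exact hlt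
    · exfalso
      have heq1 : ‖dslope g 0 z‖ = 1 / 1 := by rw [div_one]; exact heq
      have haff := Complex.affine_of_mapsTo_ball_of_exists_norm_dslope_eq_div hg (hmapsg.mono_right ball_subset_closedBall) hz heq1
      have hev : g =ᶠ[nhds (0:ℂ)] fun w => g 0 + (w - 0) • dslope g 0 z :=
        Filter.eventuallyEq_of_mem (isOpen_ball.mem_nhds hball0) haff
      have hC : HasDerivAt (fun w : ℂ => g 0 + (w - 0) • dslope g 0 z) (dslope g 0 z) 0 := by
        simpa using (((hasDerivAt_id (0:ℂ)).sub_const 0).smul_const (dslope g 0 z)).const_add (g 0)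
      have hder : deriv g 0 = dslope g 0 z := by rw [hev.deriv_eq, hC.deriv]
      rw [hder, ← hhdef, heq] at hg'
      linarith
  have hgz_eq : ∀ z : ℂ, ‖g z‖ = ‖z‖ * ‖h z‖ := by
    intro z
    have h1 := sub_smul_dslope g 0 z
    rw [hg0, sub_zero, sub_zero] at h1
    rw [hhdef, ← h1, norm_smul]
  set a := deriv g 0 with hadef
  have ha_norm : ‖a‖ = ρ := hg'
  have hh0 : h 0 = a := dslope_same g 0
  have e : ∀ x : ℂ, Complex.normSq x = ‖x‖ ^ 2 := fun x => by
    rw [Complex.normSq_eq_norm_sq]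
  have hden : ∀ z ∈ ball (0:ℂ) 1, 1 - (starRingEnd ℂ) a * h z ≠ 0 := by
    intro z hz hcon
    have hzn := hhlt z hz
    have h1 : ‖(starRingEnd ℂ) a * h z‖ < 1 := by
      rw [norm_mul, RCLike.norm_conj, ha_norm]
      nlinarith [norm_nonneg (h z)]
    rw [sub_eq_zero] at hcon
    rw [← hcon] at h1
    simp at h1
  clear_value a
  set k : ℂ → ℂ := fun z => (h z - a) / (1 - (starRingEnd ℂ) a * h z) with hkdef
  have hkd : DifferentiableOn ℂ k (ball (0:ℂ) 1) :=
    DifferentiableOn.div (hhd.sub (differentiableOn_const a))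
      ((differentiableOn_const 1).sub ((differentiableOn_const _).mul hhd)) hden
  have hlt_norm : ∀ w : ℂ, ‖w‖ < 1 → ‖w - a‖ < ‖1 - (starRingEnd ℂ) a * w‖ := by
    intro w hw
    have h1 := aux_normSq1 a w
    have ha2 : Complex.normSq a < 1 := by rw [e, ha_norm]; nlinarith
    have hw2 : Complex.normSq w < 1 := by rw [e]; nlinarith [norm_nonneg w]
    have hpos : 0 < (1 - Complex.normSq a) * (1 - Complex.normSq w) :=
      mul_pos (by linarith) (by linarith)
    apply lt_of_pow_lt_pow_left₀ 2 (norm_nonneg _)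
    rw [← e, ← e]
    linarith
  have hkmaps : Set.MapsTo k (ball (0:ℂ) 1) (ball (0:ℂ) 1) := by
    intro z hz
    rw [mem_ball_zero_iff]
    have hd := hden z hz
    rw [hkdef]
    simp only [norm_div]
    rw [div_lt_one (norm_pos_iff.2 hd)]
    exact hlt_norm (h z) (hhlt z hz)
  have hk0 : k 0 = 0 := by rw [hkdef]; simp [hh0]
  have hk_le : ∀ z ∈ ball (0:ℂ) 1, ‖k z‖ ≤ ‖z‖ := by
    intro z hz
    have := Complex.norm_le_norm_of_mapsTo_ball hkd (hkmaps.mono_right ball_subset_closedBall) hk0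
      (by rwa [← mem_ball_zero_iff])
    exact this
  have hrec : ∀ z ∈ ball (0:ℂ) 1, h z * (1 + (starRingEnd ℂ) a * k z) = k z + a := by
    intro z hz
    have hd := hden z hz
    have h1 : k z * (1 - (starRingEnd ℂ) a * h z) = h z - a := by
      rw [hkdef]; exact div_mul_cancel₀ _ hd
    linear_combination -h1
  clear_value k
  intro z hz
  have hz1 : z ∈ ball (0:ℂ) 1 := mem_ball_zero_iff.2 (lt_of_le_of_lt hz hR1)
  obtain ⟨w, hwdef⟩ : ∃ w, k z = w := ⟨k z, rfl⟩
  have hst : ‖w‖ ≤ ‖z‖ := hwdef ▸ hk_le z hz1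
  have hs0 : (0:ℝ) ≤ ‖w‖ := norm_nonneg _
  have ht1 : ‖z‖ < 1 := lt_of_le_of_lt hz hR1
  have hs1 : ‖w‖ < 1 := lt_of_le_of_lt hst ht1
  have hrec' : h z * (1 + (starRingEnd ℂ) a * w) = w + a := by
    rw [← hwdef]; exact hrec z hz1
  have hden2 : (1 : ℂ) + (starRingEnd ℂ) a * w ≠ 0 := by
    intro hcon
    have h1 : ‖(starRingEnd ℂ) a * w‖ < 1 := by
      rw [norm_mul, RCLike.norm_conj, ha_norm]
      nlinarith
    have h2 : (starRingEnd ℂ) a * w = -1 := by linear_combination hcon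
    rw [h2] at h1
    simp at h1
  have hu_le : (w * (starRingEnd ℂ) a).re ≤ ρ * ‖w‖ := by
    have h1 : |(w * (starRingEnd ℂ) a).re| ≤ ‖w * (starRingEnd ℂ) a‖ := by
      exact Complex.abs_re_le_norm _
    rw [norm_mul, RCLike.norm_conj, ha_norm] at h1
    calc (w * (starRingEnd ℂ) a).re ≤ |(w * (starRingEnd ℂ) a).re| := le_abs_self _
      _ ≤ ‖w‖ * ρ := h1
      _ = ρ * ‖w‖ := mul_comm _ _
  have hsq : ‖w + a‖ ^ 2 * (1 + ρ * ‖w‖) ^ 2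
      ≤ (‖w‖ + ρ) ^ 2 * ‖1 + (starRingEnd ℂ) a * w‖ ^ 2 := by
    rw [← e, ← e, aux_normSq3, aux_normSq2, e w, e a, ha_norm]
    exact aux_sq_ineq ρ ‖w‖ _ hρ.le hρ1.le hs0 hs1.le hu_le
  have hden_pos : 0 < ‖(1:ℂ) + (starRingEnd ℂ) a * w‖ := norm_pos_iff.2 hden2
  have hρs_pos : (0:ℝ) < 1 + ρ * ‖w‖ := by nlinarith
  have key3 : ‖w + a‖ * (1 + ρ * ‖w‖) ≤ (‖w‖ + ρ) * ‖1 + (starRingEnd ℂ) a * w‖ := by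
    have hX2 : (‖w + a‖ * (1 + ρ * ‖w‖)) ^ 2
        ≤ ((‖w‖ + ρ) * ‖1 + (starRingEnd ℂ) a * w‖) ^ 2 := by
      rw [mul_pow, mul_pow]; exact hsq
    exact (pow_le_pow_iff_left₀ (by positivity) (by positivity) two_ne_zero).1 hX2
  have hnorm_eq : ‖h z‖ * ‖(1:ℂ) + (starRingEnd ℂ) a * w‖ = ‖w + a‖ := by
    rw [← norm_mul, hrec']
  have hhz_bound : ‖h z‖ * (1 + ρ * ‖w‖) ≤ ‖w‖ + ρ := by
    have hcalc : ‖h z‖ * (1 + ρ * ‖w‖) * ‖(1:ℂ) + (starRingEnd ℂ) a * w‖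
        ≤ (‖w‖ + ρ) * ‖(1:ℂ) + (starRingEnd ℂ) a * w‖ := by
      calc ‖h z‖ * (1 + ρ * ‖w‖) * ‖(1:ℂ) + (starRingEnd ℂ) a * w‖
          = ‖w + a‖ * (1 + ρ * ‖w‖) := by rw [← hnorm_eq]; ring
        _ ≤ (‖w‖ + ρ) * ‖(1:ℂ) + (starRingEnd ℂ) a * w‖ := key3
    exact le_of_mul_le_mul_right hcalc hden_pos
  have hts : ‖z‖ * (‖w‖ + ρ) ≤ r * (1 + ρ * ‖w‖) :=
    aux_final ρ r R ‖w‖ ‖z‖ hρ hρr hr hR0 hRsq2 hR2r hs0 hst hz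
  rw [hgz_eq z]
  exact aux_last ρ r ‖w‖ ‖z‖ ‖h z‖ hhz_bound hts (norm_nonneg _) (norm_nonneg _) hρs_pos
end

section
/- Let G(z) = −z²·exp(q(z) − c) where q(z) = 2·∑_{j=1}^{d−1} binom(d−1, j)·z^j/j and c = q(−1), for d ≥ 2. Then G(0) = 0, G(−1) = −1, G'(0) = 0, G'(−1) = 0, and the only critical points of G in ℂ are 0 and −1. -/
open Complex Finset

/-- For `G z = −z² exp(q z − c)` with `q z = 2 ∑_{j=1}^{d−1} C(d−1, j) z^j / j` and
`c = q(−1)`, `d ≥ 2`: `G` fixes `0` and `−1`, both are critical points, and `0` and `−1`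
are the only critical points of `G` in `ℂ`. -/
theorem superattracting_lift_model (d : ℕ) (hd : 2 ≤ d) (q G : ℂ → ℂ)
    (hq : ∀ z : ℂ, q z = 2 * ∑ j ∈ Finset.Icc 1 (d - 1), ((d - 1).choose j : ℂ) * z ^ j / j)
    (hG : ∀ z : ℂ, G z = -z ^ 2 * Complex.exp (q z - q (-1))) :
    G 0 = 0 ∧ G (-1) = -1 ∧ deriv G 0 = 0 ∧ deriv G (-1) = 0 ∧
      ∀ z : ℂ, deriv G z = 0 → z = 0 ∨ z = -1 := by
  set n := d - 1 with hndef
  have hn : 1 ≤ n := by omega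
  set c := q (-1) with hc
  -- derivative of q
  have hq' : ∀ z : ℂ,
      HasDerivAt q (2 * ∑ j ∈ Finset.Icc 1 n, (n.choose j : ℂ) * z ^ (j - 1)) z := by
    intro z
    have h : HasDerivAt (fun w : ℂ => 2 * ∑ j ∈ Finset.Icc 1 n, ((n.choose j : ℂ)) * w ^ j / j)
        (2 * ∑ j ∈ Finset.Icc 1 n, (n.choose j : ℂ) * z ^ (j - 1)) z := by
      apply HasDerivAt.const_mul
      apply HasDerivAt.fun_sum
      intro j hj
      have hj1 : 1 ≤ j := (Finset.mem_Icc.mp hj).1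
      have hjne : (j : ℂ) ≠ 0 := Nat.cast_ne_zero.mpr (by omega)
      have h := ((hasDerivAt_pow j z).const_mul ((n.choose j : ℂ))).div_const (j : ℂ)
      refine h.congr_deriv ?_
      rw [div_eq_iff hjne]
      ring
    exact h.congr_of_eventuallyEq (by filter_upwards with w; rw [hq w])
  -- binomial identity
  have hsum : ∀ z : ℂ, ∑ j ∈ Finset.Icc 1 n, (n.choose j : ℂ) * z ^ j = (1 + z) ^ n - 1 := by
    intro z
    have h1 : (z + 1) ^ n = ∑ k ∈ Finset.range (n + 1), (n.choose k : ℂ) * z ^ k := by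
      rw [add_pow]
      refine Finset.sum_congr rfl fun k _ => by ring
    have h2 : ∑ k ∈ Finset.range (n + 1), (n.choose k : ℂ) * z ^ k
        = (∑ i ∈ Finset.range n, (n.choose (i + 1) : ℂ) * z ^ (i + 1)) + 1 := by
      rw [Finset.sum_range_succ']; simp
    have h3 : ∑ j ∈ Finset.Icc 1 n, (n.choose j : ℂ) * z ^ j
        = ∑ i ∈ Finset.range n, (n.choose (1 + i) : ℂ) * z ^ (1 + i) := by
      rw [← Finset.Ico_add_one_right_eq_Icc, Finset.sum_Ico_eq_sum_range]
      simp
    rw [h3]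
    have : ∀ i, (n.choose (1 + i) : ℂ) * z ^ (1 + i) = (n.choose (i + 1) : ℂ) * z ^ (i + 1) := by
      intro i; rw [add_comm 1 i]
    simp_rw [this]
    rw [add_comm 1 z, h1, h2]
    ring
  have hzmul : ∀ z : ℂ,
      z * (2 * ∑ j ∈ Finset.Icc 1 n, (n.choose j : ℂ) * z ^ (j - 1))
        = 2 * ((1 + z) ^ n - 1) := by
    intro z
    rw [← hsum z]
    rw [Finset.mul_sum, Finset.mul_sum, Finset.mul_sum]
    refine Finset.sum_congr rfl fun j hj => ?_
    have hj1 : 1 ≤ j := (Finset.mem_Icc.mp hj).1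
    have : z ^ j = z * z ^ (j - 1) := by
      conv_lhs => rw [show j = (j - 1) + 1 by omega]
      rw [pow_succ']
    rw [this]; ring
  -- derivative of G
  have hG' : ∀ z : ℂ,
      HasDerivAt G (-2 * z * (1 + z) ^ n * Complex.exp (q z - c)) z := by
    intro z
    have h1 : HasDerivAt (fun w : ℂ => -w ^ 2) (-(2 * z)) z := by
      simpa using (hasDerivAt_pow 2 z).fun_neg
    have h2 : HasDerivAt (fun w => Complex.exp (q w - c))
        (Complex.exp (q z - c) * (2 * ∑ j ∈ Finset.Icc 1 n, (n.choose j : ℂ) * z ^ (j - 1))) z :=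
      ((hq' z).sub_const c).cexp
    have h := h1.mul h2
    have h' : HasDerivAt G
        (-(2 * z) * Complex.exp (q z - c)
          + -z ^ 2 * (Complex.exp (q z - c)
            * (2 * ∑ j ∈ Finset.Icc 1 n, (n.choose j : ℂ) * z ^ (j - 1)))) z :=
      h.congr_of_eventuallyEq (by filter_upwards with w; rw [hG w]; rfl)
    convert h' using 1
    have key := hzmul z
    calc -2 * z * (1 + z) ^ n * Complex.exp (q z - c)
        = (-(2 * z) - z * (2 * ((1 + z) ^ n - 1))) * Complex.exp (q z - c) := by ring
      _ = (-(2 * z) - z * (z * (2 * ∑ j ∈ Finset.Icc 1 n, (n.choose j : ℂ) * z ^ (j - 1))))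
            * Complex.exp (q z - c) := by rw [key]
      _ = _ := by ring
  have hne : ∀ z : ℂ, Complex.exp (q z - c) ≠ 0 := fun z => Complex.exp_ne_zero _
  refine ⟨?_, ?_, ?_, ?_, ?_⟩
  · rw [hG 0]; ring
  · rw [hG (-1)]; simp [← hc]
  · rw [(hG' 0).deriv]; ring
  · rw [(hG' (-1)).deriv]
    have : (1 : ℂ) + -1 = 0 := by ring
    rw [this, zero_pow (by omega)]; ring
  · intro z hz
    rw [(hG' z).deriv] at hz
    rcases mul_eq_zero.mp hz with h | h
    · rcases mul_eq_zero.mp h with h | h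
      · rcases mul_eq_zero.mp h with h | h
        · exact absurd h (by norm_num)
        · exact Or.inl h
      · right
        have := pow_eq_zero_iff (n := n) (by omega) |>.mp h
        linear_combination this
    · exact absurd h (hne z)
end
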